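/- Let Φ : ℝⁿ × ℝⁿ → ℝᵖ be a vector-valued symmetric bilinear form with ∑_k Φ^α_{kk} = 0 for each α. Then |Φ|² ≥ (n/(n-1)) ∑_α (Φ^α_{11})². -/
import Mathlib


open Finset

theorem stmt1 (n p : ℕ) (hn : 2 ≤ n) (hp : 1 ≤ p)
    (Φ : Fin p → Fin n → Fin n → ℝ)
    (hsym : ∀ α i j, Φ α i j = Φ α j i)
    (htr : ∀ α, ∑ k, Φ α k k = 0) :
    (∑ α, ∑ i, ∑ j, (Φ α i j) ^ 2) ≥
      ((n : ℝ) / (n - 1)) * ∑ α, (Φ α ⟨0, by omega⟩ ⟨0, by omega⟩) ^ 2 := by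
  set z : Fin n := ⟨0, by omega⟩ with hz
  have hn1 : (1 : ℝ) ≤ (n : ℝ) - 1 := by
    have : (2 : ℝ) ≤ (n : ℝ) := by exact_mod_cast hn
    linarith
  have hpos : (0 : ℝ) < (n : ℝ) - 1 := by linarith
  rw [ge_iff_le, div_mul_eq_mul_div, div_le_iff₀ hpos]
  -- suffices per-α bound
  have key : ∀ α, (n : ℝ) * (Φ α z z) ^ 2 ≤ ((n : ℝ) - 1) * ∑ i, ∑ j, (Φ α i j) ^ 2 := by
    intro α
    set a : Fin n → ℝ := fun k => Φ α k k with ha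
    have hdiag : ∑ k, a k ^ 2 ≤ ∑ i, ∑ j, (Φ α i j) ^ 2 := by
      apply Finset.sum_le_sum
      intro i _
      exact Finset.single_le_sum (f := fun j => Φ α i j ^ 2) (fun j _ => sq_nonneg _) (mem_univ i)
    have hsplit : ∑ k, a k ^ 2 = a z ^ 2 + ∑ k ∈ univ \ {z}, a k ^ 2 := by
      rw [Finset.sum_sdiff_eq_sub (by simp), Finset.sum_singleton]
      ring
    have hsum : ∑ k ∈ univ \ {z}, a k = - a z := by
      have := htr α
      rw [Finset.sum_sdiff_eq_sub (by simp), Finset.sum_singleton]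
      simp only [ha]
      linarith
    have hcard : ((univ \ {z} : Finset (Fin n)).card : ℝ) = (n : ℝ) - 1 := by
      rw [Finset.card_sdiff_of_subset (by simp), Finset.card_singleton, Finset.card_univ, Fintype.card_fin]
      have : 1 ≤ n := by omega
      push_cast [Nat.cast_sub this]
      ring
    have hcs : (∑ k ∈ univ \ {z}, a k) ^ 2 ≤
        ((n : ℝ) - 1) * ∑ k ∈ univ \ {z}, a k ^ 2 := by
      have := sq_sum_le_card_mul_sum_sq (s := univ \ {z}) (f := a)
      calc (∑ k ∈ univ \ {z}, a k) ^ 2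
          ≤ ((univ \ {z}).card : ℝ) * ∑ k ∈ univ \ {z}, a k ^ 2 := this
        _ = ((n : ℝ) - 1) * ∑ k ∈ univ \ {z}, a k ^ 2 := by rw [hcard]
    rw [hsum] at hcs
    have htail : (a z) ^ 2 / ((n:ℝ) - 1) ≤ ∑ k ∈ univ \ {z}, a k ^ 2 := by
      rw [div_le_iff₀ hpos]
      nlinarith [hcs]
    -- now combine
    have h1 : a z ^ 2 + a z ^ 2 / ((n:ℝ) - 1) ≤ ∑ k, a k ^ 2 := by
      rw [hsplit]; linarith
    have h2 : (n : ℝ) * a z ^ 2 = ((n:ℝ) - 1) * (a z ^ 2 + a z ^ 2 / ((n:ℝ)-1)) := by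
      field_simp; ring
    calc (n : ℝ) * (Φ α z z) ^ 2 = ((n:ℝ) - 1) * (a z ^ 2 + a z ^ 2 / ((n:ℝ)-1)) := h2
      _ ≤ ((n:ℝ) - 1) * ∑ k, a k ^ 2 := by nlinarith [h1]
      _ ≤ ((n : ℝ) - 1) * ∑ i, ∑ j, (Φ α i j) ^ 2 := by nlinarith [hdiag]
  calc (n : ℝ) * ∑ α, (Φ α z z) ^ 2 = ∑ α, (n : ℝ) * (Φ α z z) ^ 2 := by rw [mul_sum]
    _ ≤ ∑ α, ((n : ℝ) - 1) * ∑ i, ∑ j, (Φ α i j) ^ 2 := Finset.sum_le_sum fun α _ => key α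
    _ = (∑ α, ∑ i, ∑ j, (Φ α i j) ^ 2) * ((n:ℝ) - 1) := by rw [← mul_sum]; ring
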